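/- Along the steady shock polar, the sonic-point parametrization w^s = (2h)^{1/2}((τ²-1)τ^(γ-1) - 2h)^{1/2} / ((τ+1)τ^(γ-1) + 2h) and M_∞² = 1 + (γ+1)h(τ) (with h evaluated at τ > 1) defines w^s and M_∞² as strictly increasing functions of τ on (1, ∞). -/

import Mathlib

open Set

/-- Polytropic enthalpy: `h(τ) = (τ^(γ-1) - 1)/(γ-1)` for `γ > 1`, `log τ` for `γ = 1`. -/
noncomputable def enthalpy (γ τ : ℝ) : ℝ :=
  if γ = 1 then Real.log τ else (τ ^ (γ - 1) - 1) / (γ - 1)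

/-- Sonic-point parametrization of the deflection tangent:
`w^s(τ) = (2h)^{1/2}((τ²-1)τ^(γ-1) - 2h)^{1/2}/((τ+1)τ^(γ-1) + 2h)`,
with `h` evaluated at `τ`. -/
noncomputable def wS (γ τ : ℝ) : ℝ :=
  Real.sqrt (2 * enthalpy γ τ) *
      Real.sqrt ((τ ^ 2 - 1) * τ ^ (γ - 1) - 2 * enthalpy γ τ) /
    ((τ + 1) * τ ^ (γ - 1) + 2 * enthalpy γ τ)

/- ### Auxiliary definitions and lemmas -/

noncomputable def Fa (γ τ : ℝ) : ℝ := (τ ^ 2 - 1) * τ ^ (γ - 1) - 2 * enthalpy γ τ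

noncomputable def Da (γ τ : ℝ) : ℝ := (τ + 1) * τ ^ (γ - 1) + 2 * enthalpy γ τ

noncomputable def gfun (γ : ℝ) : ℝ → ℝ := fun τ => 2 * enthalpy γ τ * Fa γ τ / (Da γ τ * Da γ τ)

lemma enthalpy_one (γ : ℝ) : enthalpy γ 1 = 0 := by
  unfold enthalpy; split_ifs <;> simp [Real.one_rpow]

lemma enthalpy_pos {γ τ : ℝ} (hγ : 1 ≤ γ) (hτ : 1 < τ) : 0 < enthalpy γ τ := by
  rcases eq_or_lt_of_le hγ with h1 | h1
  · simp [enthalpy, ← h1]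
    exact Real.log_pos hτ
  · simp only [enthalpy, h1.ne', if_false]
    apply div_pos _ (by linarith)
    have : 1 < τ ^ (γ - 1) :=
      (Real.one_lt_rpow_iff_of_pos (by linarith)).mpr (Or.inl ⟨hτ, by linarith⟩)
    linarith

lemma rpow_split {τ : ℝ} (hτ : 0 < τ) (γ : ℝ) : τ ^ (γ - 1) = τ ^ (γ - 2) * τ := by
  rw [show γ - 1 = (γ - 2) + 1 by ring, Real.rpow_add hτ, Real.rpow_one]

lemma enthalpy_rel {γ τ : ℝ} (hγ : 1 ≤ γ) (hτ : 0 < τ) :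
    τ ^ (γ - 1) = 1 + (γ - 1) * enthalpy γ τ := by
  rcases eq_or_lt_of_le hγ with h1 | h1
  · rw [← h1]; norm_num
  · simp only [enthalpy, h1.ne', if_false]
    rw [mul_comm (γ - 1), div_mul_cancel₀ _ (sub_ne_zero.mpr h1.ne')]
    ring

lemma hasDerivAt_enthalpy {γ τ : ℝ} (hγ : 1 ≤ γ) (hτ : 0 < τ) :
    HasDerivAt (enthalpy γ) (τ ^ (γ - 2)) τ := by
  rcases eq_or_lt_of_le hγ with h1 | h1
  · have hfun : enthalpy γ = Real.log := by funext x; simp [enthalpy, ← h1]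
    rw [hfun, ← h1]
    have : HasDerivAt Real.log τ⁻¹ τ := Real.hasDerivAt_log hτ.ne'
    convert this using 1
    rw [show (1:ℝ) - 2 = -1 by norm_num, Real.rpow_neg_one]
  · have hfun : enthalpy γ = fun x => (x ^ (γ - 1) - 1) / (γ - 1) := by
      funext x; simp [enthalpy, h1.ne']
    rw [hfun]
    have h2 : HasDerivAt (fun x : ℝ => x ^ (γ - 1)) ((γ - 1) * τ ^ (γ - 1 - 1)) τ :=
      Real.hasDerivAt_rpow_const (Or.inl hτ.ne')
    have h3 := (h2.sub_const 1).div_const (γ - 1)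
    exact h3.congr_deriv (by
      rw [show γ - 1 - 1 = γ - 2 by ring,
        mul_div_cancel_left₀ _ (sub_ne_zero.mpr h1.ne')])

lemma hasDerivAt_Fa {γ τ : ℝ} (hγ : 1 ≤ γ) (hτ : 0 < τ) :
    HasDerivAt (Fa γ)
      (2 * τ * τ ^ (γ - 1) + (τ ^ 2 - 1) * ((γ - 1) * τ ^ (γ - 2)) - 2 * τ ^ (γ - 2)) τ := by
  have hp : HasDerivAt (fun x : ℝ => x ^ (γ - 1)) ((γ - 1) * τ ^ (γ - 2)) τ := by
    rw [show γ - 2 = γ - 1 - 1 by ring]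
    exact Real.hasDerivAt_rpow_const (Or.inl hτ.ne')
  have hq : HasDerivAt (fun x : ℝ => x ^ 2 - 1) (2 * τ) τ := by
    simpa using ((hasDerivAt_pow 2 τ).sub_const 1)
  have h1 := (hq.mul hp).sub ((hasDerivAt_enthalpy hγ hτ).const_mul 2)
  have hfun : Fa γ = fun x => (x ^ 2 - 1) * x ^ (γ - 1) - 2 * enthalpy γ x := rfl
  rw [hfun]
  exact h1

lemma hasDerivAt_Da {γ τ : ℝ} (hγ : 1 ≤ γ) (hτ : 0 < τ) :
    HasDerivAt (Da γ)
      (τ ^ (γ - 1) + (τ + 1) * ((γ - 1) * τ ^ (γ - 2)) + 2 * τ ^ (γ - 2)) τ := by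
  have hp : HasDerivAt (fun x : ℝ => x ^ (γ - 1)) ((γ - 1) * τ ^ (γ - 2)) τ := by
    rw [show γ - 2 = γ - 1 - 1 by ring]
    exact Real.hasDerivAt_rpow_const (Or.inl hτ.ne')
  have hq : HasDerivAt (fun x : ℝ => x + 1) 1 τ := (hasDerivAt_id τ).add_const 1
  have h1 := (hq.mul hp).add ((hasDerivAt_enthalpy hγ hτ).const_mul 2)
  have hfun : Da γ = fun x => (x + 1) * x ^ (γ - 1) + 2 * enthalpy γ x := rfl
  rw [hfun]
  exact h1.congr_deriv (by ring)

lemma Fa_pos {γ τ : ℝ} (hγ : 1 ≤ γ) (hτ : 1 < τ) : 0 < Fa γ τ := by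
  have mono : StrictMonoOn (Fa γ) (Ici 1) := by
    apply strictMonoOn_of_deriv_pos (convex_Ici 1)
    · intro x hx
      have hx0 : (0:ℝ) < x := lt_of_lt_of_le one_pos hx
      exact (hasDerivAt_Fa hγ hx0).continuousAt.continuousWithinAt
    · intro x hx
      rw [interior_Ici] at hx
      have hx1 : (1:ℝ) < x := hx
      have hx0 : (0:ℝ) < x := by linarith
      have he : 0 < x ^ (γ - 2) := Real.rpow_pos_of_pos hx0 _
      rw [(hasDerivAt_Fa hγ hx0).deriv, rpow_split hx0 γ]
      have key : 2 * x * (x ^ (γ - 2) * x) + (x ^ 2 - 1) * ((γ - 1) * x ^ (γ - 2))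
          - 2 * x ^ (γ - 2) = x ^ (γ - 2) * (2 * x ^ 2 + (γ - 1) * (x ^ 2 - 1) - 2) := by
        ring
      rw [key]
      apply mul_pos he
      have h2 : (0:ℝ) ≤ (γ - 1) * (x ^ 2 - 1) :=
        mul_nonneg (by linarith) (by nlinarith)
      nlinarith
  have h0 : Fa γ 1 = 0 := by simp [Fa, enthalpy_one, Real.one_rpow]
  have := mono (self_mem_Ici) (show τ ∈ Ici 1 from hτ.le) hτ
  linarith [h0 ▸ this]

lemma Da_pos {γ τ : ℝ} (hγ : 1 ≤ γ) (hτ : 1 < τ) : 0 < Da γ τ := by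
  have hx0 : (0:ℝ) < τ := by linarith
  have hp : 0 < τ ^ (γ - 1) := Real.rpow_pos_of_pos hx0 _
  have hh := enthalpy_pos hγ hτ
  have : 0 < (τ + 1) * τ ^ (γ - 1) := mul_pos (by linarith) hp
  unfold Da; linarith

lemma hasDerivAt_gfun {γ x : ℝ} (hγ : 1 ≤ γ) (hx : 1 < x) :
    HasDerivAt (gfun γ)
      (((2 * x ^ (γ - 2) * Fa γ x + 2 * enthalpy γ x *
          (2 * x * x ^ (γ - 1) + (x ^ 2 - 1) * ((γ - 1) * x ^ (γ - 2)) - 2 * x ^ (γ - 2)))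
          * (Da γ x * Da γ x)
        - 2 * enthalpy γ x * Fa γ x *
          ((x ^ (γ - 1) + (x + 1) * ((γ - 1) * x ^ (γ - 2)) + 2 * x ^ (γ - 2)) * Da γ x
            + Da γ x * (x ^ (γ - 1) + (x + 1) * ((γ - 1) * x ^ (γ - 2)) + 2 * x ^ (γ - 2))))
        / (Da γ x * Da γ x) ^ 2) x := by
  have hx0 : (0:ℝ) < x := by linarith
  have hD := hasDerivAt_Da hγ hx0
  have hu := ((hasDerivAt_enthalpy hγ hx0).const_mul 2).mul (hasDerivAt_Fa hγ hx0)
  have hv := hD.mul hD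
  have hvne : Da γ x * Da γ x ≠ 0 := (mul_pos (Da_pos hγ hx) (Da_pos hγ hx)).ne'
  have hq := hu.div hv hvne
  exact hq

theorem gfun_strictMono {γ : ℝ} (hγ : 1 ≤ γ) : StrictMonoOn (gfun γ) (Set.Ioi 1) := by
  apply strictMonoOn_of_deriv_pos (convex_Ioi 1)
  · intro x hx
    exact (hasDerivAt_gfun hγ hx).continuousAt.continuousWithinAt
  · intro x hx
    rw [interior_Ioi] at hx
    have hx1 : (1:ℝ) < x := hx
    have hx0 : (0:ℝ) < x := by linarith
    have he : 0 < x ^ (γ - 2) := Real.rpow_pos_of_pos hx0 _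
    have hh := enthalpy_pos hγ hx1
    have hFpos := Fa_pos hγ hx1
    have hDpos := Da_pos hγ hx1
    rw [(hasDerivAt_gfun hγ hx1).deriv]
    apply div_pos _ (pow_pos (mul_pos hDpos hDpos) 2)
    have hre : x ^ (γ - 1) = x ^ (γ - 2) * x := rpow_split hx0 γ
    have hrel : x ^ (γ - 2) * x = 1 + (γ - 1) * enthalpy γ x := by
      rw [← hre]; exact enthalpy_rel hγ hx0
    have hT : 0 < Da γ x *
        (2 * (x + 1) * x ^ (γ - 2) * (2 * (γ + 1) * x * (enthalpy γ x) ^ 2 + Fa γ x)) := by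
      apply mul_pos hDpos
      apply mul_pos (mul_pos (by linarith : (0:ℝ) < 2 * (x + 1)) he)
      have h1 : 0 ≤ 2 * (γ + 1) * x * (enthalpy γ x) ^ 2 :=
        mul_nonneg (mul_nonneg (by linarith) hx0.le) (sq_nonneg _)
      linarith
    have hkey :
        (2 * x ^ (γ - 2) * Fa γ x + 2 * enthalpy γ x *
          (2 * x * x ^ (γ - 1) + (x ^ 2 - 1) * ((γ - 1) * x ^ (γ - 2)) - 2 * x ^ (γ - 2)))
          * (Da γ x * Da γ x)
        - 2 * enthalpy γ x * Fa γ x *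
          ((x ^ (γ - 1) + (x + 1) * ((γ - 1) * x ^ (γ - 2)) + 2 * x ^ (γ - 2)) * Da γ x
            + Da γ x * (x ^ (γ - 1) + (x + 1) * ((γ - 1) * x ^ (γ - 2)) + 2 * x ^ (γ - 2)))
        = Da γ x *
        (2 * (x + 1) * x ^ (γ - 2) * (2 * (γ + 1) * x * (enthalpy γ x) ^ 2 + Fa γ x)) := by
      simp only [Fa, Da]
      rw [hre]
      linear_combination
        (-8 * x ^ (γ - 2) * (enthalpy γ x) ^ 2
          - 8 * x * x ^ (γ - 2) * (enthalpy γ x) ^ 2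
          - 8 * x * (x ^ (γ - 2)) ^ 2 * enthalpy γ x
          - 12 * x ^ 2 * (x ^ (γ - 2)) ^ 2 * enthalpy γ x
          - 2 * x ^ 2 * (x ^ (γ - 2)) ^ 3
          - 4 * x ^ 3 * (x ^ (γ - 2)) ^ 3
          + 4 * x ^ 4 * (x ^ (γ - 2)) ^ 2 * enthalpy γ x
          + 4 * x ^ 5 * (x ^ (γ - 2)) ^ 3
          + 2 * x ^ 6 * (x ^ (γ - 2)) ^ 3) * hrel
    rw [hkey]
    exact hT

lemma wS_eq {γ τ : ℝ} (hγ : 1 ≤ γ) (hτ : 1 < τ) : wS γ τ = Real.sqrt (gfun γ τ) := by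
  have hh := enthalpy_pos hγ hτ
  have hFpos := Fa_pos hγ hτ
  have hDpos := Da_pos hγ hτ
  have h1 : 0 ≤ 2 * enthalpy γ τ := by linarith
  unfold wS gfun Fa Da
  rw [Real.sqrt_div (by unfold Fa at hFpos; nlinarith : (0:ℝ) ≤ 2 * enthalpy γ τ *
      ((τ ^ 2 - 1) * τ ^ (γ - 1) - 2 * enthalpy γ τ)),
    Real.sqrt_mul_self (le_of_lt (by unfold Da at hDpos; exact hDpos)),
    Real.sqrt_mul h1]

/-- Along the steady shock polar sonic-point parametrization, both `w^s` and
`M_∞² = 1 + (γ+1)h(τ)` are strictly increasing functions of `τ` on `(1, ∞)`. -/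
theorem sonic_parametrization_strictMono (γ : ℝ) (hγ : 1 ≤ γ) :
    StrictMonoOn (wS γ) (Set.Ioi 1) ∧
    StrictMonoOn (fun τ => 1 + (γ + 1) * enthalpy γ τ) (Set.Ioi 1) := by
  constructor
  · intro a ha b hb hab
    have ha1 : (1:ℝ) < a := ha
    have hb1 : (1:ℝ) < b := hb
    rw [wS_eq hγ ha1, wS_eq hγ hb1]
    apply Real.sqrt_lt_sqrt _ (gfun_strictMono hγ ha hb hab)
    have hh := enthalpy_pos hγ ha1
    have hFpos := Fa_pos hγ ha1
    have hDpos := Da_pos hγ ha1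
    exact le_of_lt (div_pos (mul_pos (by linarith) hFpos) (mul_pos hDpos hDpos))
  · apply strictMonoOn_of_deriv_pos (convex_Ioi 1)
    · intro x hx
      have hx0 : (0:ℝ) < x := lt_trans one_pos hx
      exact (((hasDerivAt_enthalpy hγ hx0).const_mul (γ + 1)).const_add 1).continuousAt.continuousWithinAt
    · intro x hx
      rw [interior_Ioi] at hx
      have hx0 : (0:ℝ) < x := lt_trans one_pos hx
      have hd : HasDerivAt (fun τ => 1 + (γ + 1) * enthalpy γ τ) ((γ + 1) * x ^ (γ - 2)) x :=
        ((hasDerivAt_enthalpy hγ hx0).const_mul (γ + 1)).const_add 1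
      rw [hd.deriv]
      exact mul_pos (by linarith) (Real.rpow_pos_of_pos hx0 _)
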